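/- For every α∈(0,1], there exists an instance consisting of a star graph and two agents with identical binary additive utilities such that no connected allocation is α-EF1. -/

import Mathlib

namespace GraphFair

variable {V : Type*}

/-- A bundle is connected if it is empty or induces a connected subgraph of `G`. -/
def BundleConn (G : SimpleGraph V) (B : Finset V) : Prop :=
  B = ∅ ∨ (G.induce (B : Set V)).Connected

/-- A connected allocation of all the items among `n` agents: the bundles cover `V`,
are pairwise disjoint, and each bundle is connected in `G`. -/
def IsConnAlloc (G : SimpleGraph V) {n : ℕ} (A : Fin n → Finset V) : Prop :=
  (∀ v : V, ∃ i, v ∈ A i) ∧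
  (∀ i j : Fin n, i ≠ j → Disjoint (A i) (A j)) ∧
  (∀ i, BundleConn G (A i))

variable [DecidableEq V]

/-- Partitions of `X` into two bundles, each connected in the induced subgraph `G[X]`
(for `Y ⊆ X`, connectivity of `Y` in `G[X]` is the same as connectivity of `Y` in `G`). -/
def Part2 (G : SimpleGraph V) (X : Finset V) : Set (Finset V × Finset V) :=
  {p | p.1 ∪ p.2 = X ∧ Disjoint p.1 p.2 ∧ BundleConn G p.1 ∧ BundleConn G p.2}

/-- The pairwise maximin share of a bundle `X` with respect to utility `u`:
the maximum over partitions of `X` into two connected bundles of the minimum utility. -/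
noncomputable def pmms (G : SimpleGraph V) (u : Finset V → ℝ) (X : Finset V) : ℝ :=
  sSup ((fun p : Finset V × Finset V => min (u p.1) (u p.2)) '' Part2 G X)

/-- The `n`-agent maximin share of the whole vertex set: maximum over partitions of `V`
into `n` connected bundles of the minimum utility of a bundle. -/
noncomputable def mms (G : SimpleGraph V) (u : Finset V → ℝ) (n : ℕ) : ℝ :=
  sSup ((fun A : Fin n → Finset V => ⨅ i, u (A i)) '' {A | IsConnAlloc G A})

/-- Agents `i` and `j` are adjacent under allocation `A`. -/
def AdjUnder (G : SimpleGraph V) {n : ℕ} (A : Fin n → Finset V) (i j : Fin n) : Prop :=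
  ∃ v ∈ A i, ∃ w ∈ A j, G.Adj v w

/-- An allocation is `α`-PMMS if every agent with an empty bundle, and every agent with
respect to each of her neighbours, receives at least `α` times her pairwise maximin share. -/
def IsAlphaPMMS (G : SimpleGraph V) {n : ℕ} (u : Fin n → Finset V → ℝ)
    (A : Fin n → Finset V) (α : ℝ) : Prop :=
  ∀ i j : Fin n, i ≠ j → (A i = ∅ ∨ AdjUnder G A i j) →
    α * pmms G (u i) (A i ∪ A j) ≤ u i (A i)

/-- An allocation is `α`-MMS if every agent receives at least `α` times her maximin share. -/
def IsAlphaMMS (G : SimpleGraph V) {n : ℕ} (u : Fin n → Finset V → ℝ)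
    (A : Fin n → Finset V) (α : ℝ) : Prop :=
  ∀ i : Fin n, α * mms G (u i) n ≤ u i (A i)

/-- An additive (nonnegative) utility function. -/
def AdditiveUtil (u : Finset V → ℝ) : Prop :=
  (∀ X : Finset V, u X = ∑ v ∈ X, u {v}) ∧ ∀ v : V, 0 ≤ u {v}

/-- A binary additive utility function. -/
def BinaryAdditiveUtil (u : Finset V → ℝ) : Prop :=
  (∀ X : Finset V, u X = ∑ v ∈ X, u {v}) ∧ ∀ v : V, u {v} = 0 ∨ u {v} = 1

/-- A monotone (nonnegative) utility function. -/
def MonotoneUtil (u : Finset V → ℝ) : Prop :=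
  (∀ X Y : Finset V, X ⊆ Y → u X ≤ u Y) ∧ 0 ≤ u ∅

/-- An allocation is `α`-EF1. -/
def IsAlphaEF1 {n : ℕ} (u : Fin n → Finset V → ℝ) (A : Fin n → Finset V) (α : ℝ) : Prop :=
  ∀ i j : Fin n, i ≠ j → A j ≠ ∅ → ∃ v ∈ A j, α * u i ((A j).erase v) ≤ u i (A i)

/-- An allocation is EFX (envy-free up to any item). -/
def IsEFX {n : ℕ} (u : Fin n → Finset V → ℝ) (A : Fin n → Finset V) : Prop :=
  ∀ i j : Fin n, i ≠ j → A j ≠ ∅ → ∀ v ∈ A j, u i ((A j).erase v) ≤ u i (A i)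

/-- The number of agents receiving positive utility. -/
noncomputable def nashCount {n : ℕ} (u : Fin n → Finset V → ℝ) (A : Fin n → Finset V) : ℕ :=
  (Finset.univ.filter fun i : Fin n => 0 < u i (A i)).card

/-- The product of the positive utilities. -/
noncomputable def nashProd {n : ℕ} (u : Fin n → Finset V → ℝ) (A : Fin n → Finset V) : ℝ :=
  ∏ i ∈ Finset.univ.filter (fun i : Fin n => 0 < u i (A i)), u i (A i)

/-- A maximum Nash welfare (MNW) connected allocation: maximizes the number of agents with
positive utility and, subject to that, the product of the positive utilities. -/
def IsMNW (G : SimpleGraph V) {n : ℕ} (u : Fin n → Finset V → ℝ)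
    (A : Fin n → Finset V) : Prop :=
  IsConnAlloc G A ∧
  (∀ B : Fin n → Finset V, IsConnAlloc G B → nashCount u B ≤ nashCount u A) ∧
  (∀ B : Fin n → Finset V, IsConnAlloc G B →
    nashCount u B = nashCount u A → nashProd u B ≤ nashProd u A)

/-- `A'` is a Pareto-improvement of `A`. -/
def ParetoImproves {n : ℕ} (u : Fin n → Finset V → ℝ) (A' A : Fin n → Finset V) : Prop :=
  (∀ i, u i (A i) ≤ u i (A' i)) ∧ ∃ j, u j (A j) < u j (A' j)

/-- A connected allocation is Pareto-optimal if no connected allocation Pareto-improves it. -/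
def IsParetoOptimal (G : SimpleGraph V) {n : ℕ} (u : Fin n → Finset V → ℝ)
    (A : Fin n → Finset V) : Prop :=
  ∀ B : Fin n → Finset V, IsConnAlloc G B → ¬ ParetoImproves u B A

/-- The vector of agents' utilities rearranged in increasing order. -/
noncomputable def sortedUtils {n : ℕ} (u : Fin n → Finset V → ℝ)
    (A : Fin n → Finset V) : List ℝ :=
  (((Finset.univ : Finset (Fin n)).val.map fun i => u i (A i)).sort (· ≤ ·))

/-- `A'` is a leximin improvement of `A`: the sorted utility vector of `A'` is
lexicographically greater than that of `A`. -/
def LeximinImproves {n : ℕ} (u : Fin n → Finset V → ℝ) (A' A : Fin n → Finset V) : Prop :=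
  List.Lex (· < ·) (sortedUtils u A) (sortedUtils u A')

/-- A connected leximin allocation. -/
def IsLeximin (G : SimpleGraph V) {n : ℕ} (u : Fin n → Finset V → ℝ)
    (A : Fin n → Finset V) : Prop :=
  IsConnAlloc G A ∧ ∀ B : Fin n → Finset V, IsConnAlloc G B → ¬ LeximinImproves u B A

/-- `G` is a star: there is a central vertex adjacent to exactly all other vertices. -/
def IsStar (G : SimpleGraph V) : Prop :=
  ∃ c : V, ∀ a b : V, G.Adj a b ↔ a ≠ b ∧ (a = c ∨ b = c)

/-- A submodular utility function. -/
def SubmodularUtil (u : Finset V → ℝ) : Prop :=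
  ∀ X Y : Finset V, u (X ∪ Y) + u (X ∩ Y) ≤ u X + u Y

/-- A utility function with binary marginal gains (and `u ∅ = 0`). -/
def BinaryMarginalGains (u : Finset V → ℝ) : Prop :=
  u ∅ = 0 ∧ ∀ (X : Finset V) (v : V),
    u (insert v X) - u X = 0 ∨ u (insert v X) - u X = 1

/-- On the path with `m` vertices (edges numbered `1, …, m-1` from left to right),
`itv m x y` is the bundle `[x, y]` of all vertices between positions `x` and `y`. -/
def itv (m x y : ℕ) : Finset (Fin m) :=
  Finset.univ.filter fun v : Fin m => x ≤ v.val ∧ v.val < y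

end GraphFair

open GraphFair

/-- star graph on `Fin k` with center `0` -/
def starG (k : ℕ) [NeZero k] : SimpleGraph (Fin k) where
  Adj a b := a ≠ b ∧ (a = 0 ∨ b = 0)
  symm := ⟨by tauto⟩
  loopless := ⟨by intro a h; exact h.1 rfl⟩

lemma starG_bundle_card {k : ℕ} [NeZero k] {B : Finset (Fin k)}
    (hB : BundleConn (starG k) B) (h0 : (0 : Fin k) ∉ B) : B.card ≤ 1 := by
  rcases hB with h | h
  · simp [h]
  · rw [Finset.card_le_one]
    intro a ha b hb
    obtain ⟨w⟩ := h.preconnected ⟨a, by simpa using ha⟩ ⟨b, by simpa using hb⟩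
    cases w with
    | nil => rfl
    | @cons _ c _ hadj p =>
      have hadj' : (starG k).Adj a c := hadj
      rcases hadj'.2 with h1 | h1
      · exact absurd (h1 ▸ ha) h0
      · exact absurd (h1 ▸ c.2) (by simpa using h0)

open GraphFair in
/-- For every `α ∈ (0, 1]`, there exists an instance consisting of a star
graph and two agents with identical binary additive utilities such that no connected
allocation is `α`-EF1. -/
theorem exists_star_no_alpha_ef1 :
    ∀ α : ℝ, 0 < α → α ≤ 1 →
      ∃ (k : ℕ) (G : SimpleGraph (Fin k)) (u : Finset (Fin k) → ℝ),
        IsStar G ∧ BinaryAdditiveUtil u ∧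
        ∀ A : Fin 2 → Finset (Fin k), IsConnAlloc G A →
          ¬ IsAlphaEF1 (fun _ => u) A α := by
  intro α hα hα1
  set k : ℕ := ⌈1/α⌉₊ + 3 with hk
  have hk3 : 3 ≤ k := by omega
  haveI : NeZero k := ⟨by omega⟩
  refine ⟨k, starG k, fun X => (X.card : ℝ), ⟨0, fun a b => Iff.rfl⟩, ?_, ?_⟩
  · constructor
    · intro X; simp
    · intro v; right; simp
  · intro A hconn hef
    obtain ⟨hcov, hdisj, hc⟩ := hconn
    obtain ⟨i, hi⟩ := hcov 0
    have hne2 : ∀ x : Fin 2, x ≠ x + 1 := by decide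
    have htwo2 : ∀ x y : Fin 2, y = x ∨ y = x + 1 := by decide
    set j : Fin 2 := i + 1 with hj
    have hij : i ≠ j := hne2 i
    have htwo : ∀ x : Fin 2, x = i ∨ x = j := htwo2 i
    have h0j : (0 : Fin k) ∉ A j := Finset.disjoint_left.mp (hdisj i j hij) hi
    have hcardj : (A j).card ≤ 1 := starG_bundle_card (hc j) h0j
    have hcompl : ∀ v : Fin k, v ∉ A j → v ∈ A i := by
      intro v hv
      obtain ⟨x, hx⟩ := hcov v
      rcases htwo x with rfl | rfl
      · exact hx
      · exact absurd hx hv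
    interval_cases h1 : (A j).card
    · -- A j empty, A i = univ
      have hje : A j = ∅ := Finset.card_eq_zero.mp h1
      have hiu : A i = Finset.univ := by
        ext v
        simp only [Finset.mem_univ, iff_true]
        exact hcompl v (by simp [hje])
      obtain ⟨v, hv, hle⟩ := hef j i hij.symm (by
        intro h; rw [h] at hi; simp at hi)
      simp only [hje] at hle
      have hcard : ((A i).erase v).card = k - 1 := by
        rw [Finset.card_erase_of_mem hv, hiu, Finset.card_univ, Fintype.card_fin]
      have : (0:ℝ) < α * (((A i).erase v).card : ℝ) := by
        apply mul_pos hα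
        rw [hcard]
        have : 1 ≤ k - 1 := by omega
        exact_mod_cast Nat.lt_of_lt_of_le Nat.zero_lt_one this
      simp only [Finset.card_empty, Nat.cast_zero] at hle
      linarith
    · -- A j a singleton
      obtain ⟨ℓ, hℓ⟩ := Finset.card_eq_one.mp h1
      obtain ⟨v, hv, hle⟩ := hef j i hij.symm (by
        intro h; rw [h] at hi; simp at hi)
      have hiu : A i = Finset.univ.erase ℓ := by
        ext w
        simp only [Finset.mem_erase, Finset.mem_univ, and_true]
        constructor
        · intro hw
          intro hwℓ
          exact Finset.disjoint_left.mp (hdisj i j hij) hw (by simp [hℓ, hwℓ])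
        · intro hw
          exact hcompl w (by simp [hℓ, hw])
      have hcard : ((A i).erase v).card = k - 2 := by
        rw [Finset.card_erase_of_mem hv, hiu, Finset.card_erase_of_mem (Finset.mem_univ ℓ),
          Finset.card_univ, Fintype.card_fin]
        omega
      simp only [hcard, hℓ, Finset.card_singleton, Nat.cast_one] at hle
      have hcast : ((k - 2 : ℕ) : ℝ) = (k : ℝ) - 2 := by
        have : 2 ≤ k := by omega
        push_cast [this]; ring
      rw [hcast] at hle
      have hceil : (1/α : ℝ) ≤ (⌈1/α⌉₊ : ℕ) := Nat.le_ceil _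
      have hkk : (k : ℝ) - 2 = (⌈1/α⌉₊ : ℕ) + 1 := by
        rw [hk]; push_cast; ring
      have h1lt : 1 < α * ((k:ℝ) - 2) := by
        rw [hkk]
        have : α * (1/α + 1) ≤ α * ((⌈1/α⌉₊ : ℕ) + 1) := by
          apply mul_le_mul_of_nonneg_left (by linarith) hα.le
        have heq : α * (1/α + 1) = 1 + α := by
          field_simp
        linarith
      linarith
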